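/- Let k be a field of characteristic not 2 and let q1, q2 be quadratic forms in 5 variables over k defining a smooth complete intersection surface X ⊂ P^4_k. Suppose all five roots of det(λM1 + μM2) in P^1(k̄) are k-rational. Then q1 and q2 are simultaneously diagonalizable over k: there exists an invertible matrix P ∈ GL_5(k) such that both P^T M1 P and P^T M2 P are diagonal. -/

import Mathlib

set_option maxRecDepth 8000

open Matrix Polynomial

namespace Stmt6Aux

variable {F : Type*} [Field F]

lemma bilin_comm (M : Matrix (Fin 5) (Fin 5) F) (hM : M.IsSymm) (x y : Fin 5 → F) :
    x ⬝ᵥ M *ᵥ y = y ⬝ᵥ M *ᵥ x := by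
  calc x ⬝ᵥ M *ᵥ y = (x ᵥ* M) ⬝ᵥ y := dotProduct_mulVec x M y
  _ = (Mᵀ *ᵥ x) ⬝ᵥ y := by rw [mulVec_transpose]
  _ = (M *ᵥ x) ⬝ᵥ y := by rw [hM.eq]
  _ = y ⬝ᵥ M *ᵥ x := dotProduct_comm _ _

lemma mulVec_map' {k K : Type*} [Field k] [Field K] (f : k →+* K)
    (M : Matrix (Fin 5) (Fin 5) k) (v : Fin 5 → k) :
    (M.map f) *ᵥ (f ∘ v) = f ∘ (M *ᵥ v) := by
  funext i
  simp only [mulVec, dotProduct, map_apply, Function.comp_apply]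
  rw [map_sum]
  simp [_root_.map_mul]

lemma dot_map' {k K : Type*} [Field k] [Field K] (f : k →+* K) (x y : Fin 5 → k) :
    (f ∘ x) ⬝ᵥ (f ∘ y) = f (x ⬝ᵥ y) := by
  simp only [dotProduct, Function.comp_apply]
  rw [map_sum]
  simp [_root_.map_mul]

lemma dot_mulVec_sum {ι : Type*} [Fintype ι] [DecidableEq ι] (M : Matrix (Fin 5) (Fin 5) F)
    (x : Fin 5 → F) (c : ι → F) (w : ι → Fin 5 → F) :
    x ⬝ᵥ M *ᵥ (∑ j, c j • w j) = ∑ j, c j * (x ⬝ᵥ M *ᵥ w j) := by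
  have h1 : M *ᵥ (∑ j, c j • w j) = ∑ j, c j • (M *ᵥ w j) := by
    show mulVecLin M _ = _
    rw [map_sum]
    simp only [LinearMap.map_smul, mulVecLin_apply]
  rw [h1]
  induction (Finset.univ : Finset ι) using Finset.induction with
  | empty => simp
  | insert _ _ h ih =>
      rw [Finset.sum_insert h, Finset.sum_insert h, dotProduct_add, ih, dotProduct_smul,
        smul_eq_mul]

lemma finrank_ker_comp {V : Type*} [AddCommGroup V] [Module F V] [FiniteDimensional F V]
    (f g : V →ₗ[F] V) :
    Module.finrank F (LinearMap.ker (f ∘ₗ g)) ≤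
      Module.finrank F (LinearMap.ker f) + Module.finrank F (LinearMap.ker g) := by
  have hmap : ∀ x ∈ LinearMap.ker (f ∘ₗ g), g x ∈ LinearMap.ker f := by
    intro x hx
    simpa [LinearMap.mem_ker] using hx
  set h : LinearMap.ker (f ∘ₗ g) →ₗ[F] LinearMap.ker f := g.restrict hmap with hh
  have hrn := h.finrank_range_add_finrank_ker
  have h1 : Module.finrank F (LinearMap.range h) ≤ Module.finrank F (LinearMap.ker f) :=
    Submodule.finrank_le _
  have h2 : Module.finrank F (LinearMap.ker h) ≤ Module.finrank F (LinearMap.ker g) := by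
    have : ∀ x : LinearMap.ker h, ((x : LinearMap.ker (f ∘ₗ g)) : V) ∈ LinearMap.ker g := by
      rintro ⟨⟨x, hx⟩, hx2⟩
      have : h ⟨x, hx⟩ = 0 := hx2
      have : g x = 0 := by
        have := congrArg (Subtype.val) this
        simpa [hh, LinearMap.restrict_apply] using this
      simpa [LinearMap.mem_ker]
    let φ : LinearMap.ker h →ₗ[F] LinearMap.ker g :=
      LinearMap.codRestrict _ ((Submodule.subtype _).comp (Submodule.subtype _)) this
    have hinj : Function.Injective φ := by
      rintro x y hxy
      have h' : ((x : LinearMap.ker (f ∘ₗ g)) : V) = ((y : LinearMap.ker (f ∘ₗ g)) : V) := by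
        simpa [φ, LinearMap.codRestrict] using congrArg Subtype.val hxy
      exact Subtype.ext (Subtype.ext h')
    exact LinearMap.finrank_le_finrank_of_injective hinj
  omega

lemma ker_list_prod (l : List (Matrix (Fin 5) (Fin 5) F)) :
    Module.finrank F (LinearMap.ker (mulVecLin l.prod)) ≤
      (l.map fun M => Module.finrank F (LinearMap.ker (mulVecLin M))).sum := by
  induction l with
  | nil =>
    have h1 : LinearMap.ker (mulVecLin (1 : Matrix (Fin 5) (Fin 5) F)) = ⊥ := by
      rw [Matrix.mulVecLin_one, LinearMap.ker_id]
    show Module.finrank F (LinearMap.ker (mulVecLin (1 : Matrix (Fin 5) (Fin 5) F))) ≤ 0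
    rw [h1]
    simp
  | cons M l ih =>
      rw [List.prod_cons, List.map_cons, List.sum_cons, mulVecLin_mul]
      exact le_trans (finrank_ker_comp _ _) (by omega)

lemma eval_charpoly_scalar (B : Matrix (Fin 5) (Fin 5) F) (σ : F) :
    B.charpoly.eval σ = (σ • (1 : Matrix (Fin 5) (Fin 5) F) - B).det := by
  rw [Matrix.charpoly]
  rw [show Polynomial.eval σ (Matrix.charmatrix B).det
      = ((Matrix.charmatrix B).map (Polynomial.evalRingHom σ)).det from
    RingHom.map_det (Polynomial.evalRingHom σ) _]
  congr 1
  ext i j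
  by_cases h : i = j
  · subst h
    simp [charmatrix_apply_eq, Matrix.smul_apply, Matrix.sub_apply, Matrix.one_apply_eq]
  · simp [charmatrix_apply_ne _ _ _ h, Matrix.smul_apply, Matrix.sub_apply,
      Matrix.one_apply_ne h]

theorem main {k K : Type*} [Field k] [Field K] [IsAlgClosed K] (f : k →+* K)
    (M1 M2 : Matrix (Fin 5) (Fin 5) k) (hs1 : M1.IsSymm) (hs2 : M2.IsSymm)
    (hD : ∀ x : Fin 5 → K, x ≠ 0 → x ⬝ᵥ (M1.map f) *ᵥ x = 0 → x ⬝ᵥ (M2.map f) *ᵥ x = 0 →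
      ∀ a b : K, ¬(a = 0 ∧ b = 0) → a • ((M1.map f) *ᵥ x) + b • ((M2.map f) *ᵥ x) = 0 → False)
    (hrat : ∀ lam mu : K, ¬(lam = 0 ∧ mu = 0) → (lam • M1.map f + mu • M2.map f).det = 0 →
      ∃ (c : K) (lam' mu' : k), c ≠ 0 ∧ lam = c * f lam' ∧ mu = c * f mu') :
    ∃ P : Matrix (Fin 5) (Fin 5) k, IsUnit P.det ∧
      (Pᵀ * M1 * P).IsDiag ∧ (Pᵀ * M2 * P).IsDiag := by
  classical
  set A1 := M1.map f with hA1
  set A2 := M2.map f with hA2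
  have hA1s : A1.IsSymm := hs1.map f
  have hA2s : A2.IsSymm := hs2.map f
  -- Step 1: some member of the pencil over K is nonsingular
  have hEx : ∃ t : K, (A1 + t • A2).det ≠ 0 := by
    by_contra hcon
    push_neg at hcon
    set e := Infinite.natEmbedding K with he
    set t : Fin 6 → K := fun i => e (i : ℕ) with ht
    have htinj : Function.Injective t := by
      intro a b hab
      exact Fin.ext (e.injective hab)
    have hkv : ∀ i : Fin 6, ∃ w : Fin 5 → K, w ≠ 0 ∧ (A1 + t i • A2) *ᵥ w = 0 := by
      intro i
      obtain ⟨v, hv0, hv⟩ := (Matrix.exists_mulVec_eq_zero_iff).mpr (hcon (t i))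
      exact ⟨v, hv0, hv⟩
    choose w hw0 hw using hkv
    have hker : ∀ i, A1 *ᵥ w i + t i • (A2 *ᵥ w i) = 0 := by
      intro i
      have := hw i
      rwa [add_mulVec, smul_mulVec] at this
    have horth : ∀ i j, i ≠ j → w i ⬝ᵥ A2 *ᵥ w j = 0 := by
      intro i j hij
      have h1 : w i ⬝ᵥ A1 *ᵥ w j + t j * (w i ⬝ᵥ A2 *ᵥ w j) = 0 := by
        have := congrArg (fun z => w i ⬝ᵥ z) (hker j)
        simpa [dotProduct_add, dotProduct_smul, smul_eq_mul] using this
      have h2 : w i ⬝ᵥ A1 *ᵥ w j + t i * (w i ⬝ᵥ A2 *ᵥ w j) = 0 := by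
        have h3 := congrArg (fun z => w j ⬝ᵥ z) (hker i)
        simp only [dotProduct_add, dotProduct_smul, smul_eq_mul, dotProduct_zero] at h3
        rwa [bilin_comm A1 hA1s (w j) (w i), bilin_comm A2 hA2s (w j) (w i)] at h3
      have hne : t i - t j ≠ 0 := sub_ne_zero.mpr fun hEq => hij (htinj hEq)
      have hmul : (t i - t j) * (w i ⬝ᵥ A2 *ᵥ w j) = 0 := by linear_combination h2 - h1
      exact (mul_eq_zero.mp hmul).resolve_left hne
    -- six vectors in K^5 are dependent
    set Q : Matrix (Fin 6) (Fin 6) K :=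
      fun i j => if h : (i : ℕ) < 5 then w j ⟨(i : ℕ), h⟩ else 0 with hQ
    have hQdet : Q.det = 0 := by
      apply Matrix.det_eq_zero_of_row_eq_zero ⟨5, by omega⟩
      intro j
      simp only [hQ]
      rw [dif_neg (by omega)]
    obtain ⟨c, hc0, hQc⟩ := (Matrix.exists_mulVec_eq_zero_iff).mpr hQdet
    have hrel : ∀ r : Fin 5, ∑ j, c j * w j r = 0 := by
      intro r
      have h1 := congrFun hQc ⟨(r : ℕ), by omega⟩
      simp only [Pi.zero_apply, mulVec, dotProduct, hQ] at h1
      calc ∑ j, c j * w j r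
          = ∑ j, (if h : ((⟨(r : ℕ), by omega⟩ : Fin 6) : ℕ) < 5
              then w j ⟨((⟨(r : ℕ), by omega⟩ : Fin 6) : ℕ), h⟩ else 0) * c j := by
            refine Finset.sum_congr rfl fun j _ => ?_
            rw [dif_pos (show ((⟨(r : ℕ), by omega⟩ : Fin 6) : ℕ) < 5 from r.isLt)]
            rw [mul_comm]
          _ = 0 := h1
    have hsum : (∑ j, c j • w j) = 0 := by
      funext r
      simpa [Finset.sum_apply, smul_eq_mul] using hrel r
    obtain ⟨j0, hj0⟩ := Function.ne_iff.mp hc0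
    have hq2 : w j0 ⬝ᵥ A2 *ᵥ w j0 = 0 := by
      have h0 : ∑ j, c j * (w j0 ⬝ᵥ A2 *ᵥ w j) = 0 := by
        rw [← dot_mulVec_sum, hsum, mulVec_zero, dotProduct_zero]
      rw [Finset.sum_eq_single j0 (fun b _ hb => by
        rw [horth j0 b (Ne.symm hb), mul_zero]) (by simp)] at h0
      exact (mul_eq_zero.mp h0).resolve_left hj0
    have hq1 : w j0 ⬝ᵥ A1 *ᵥ w j0 = 0 := by
      have h1 := congrArg (fun z => w j0 ⬝ᵥ z) (hker j0)
      simp only [dotProduct_add, dotProduct_smul, smul_eq_mul, dotProduct_zero] at h1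
      rw [hq2, mul_zero, add_zero] at h1
      exact h1
    exact hD (w j0) (hw0 j0) hq1 hq2 1 (t j0) (by simp)
      (by rw [one_smul]; exact hker j0)
  obtain ⟨t1, hN1det⟩ := hEx
  set N1 : Matrix (Fin 5) (Fin 5) K := A1 + t1 • A2 with hN1
  have hN1u : IsUnit N1.det := isUnit_iff_ne_zero.mpr hN1det
  set B : Matrix (Fin 5) (Fin 5) K := N1⁻¹ * A2 with hB
  have hN1B : N1 * B = A2 := Matrix.mul_nonsing_inv_cancel_left N1 A2 hN1u
  have hN1s : N1.IsSymm := hA1s.add (hA2s.smul t1)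
  have hA1N : A1 = N1 - t1 • A2 := by rw [hN1]; abel
  -- self-adjointness of B - σ•1 w.r.t. the N1 bilinear form
  have hSA : ∀ (σ : K) (x y : Fin 5 → K),
      ((B - σ • 1) *ᵥ x) ⬝ᵥ (N1 *ᵥ y) = x ⬝ᵥ N1 *ᵥ ((B - σ • 1) *ᵥ y) := by
    intro σ x y
    have hmul : (B - σ • 1)ᵀ * N1 = N1 * (B - σ • 1) := by
      have hsym : (N1 * (B - σ • 1)).IsSymm := by
        have : N1 * (B - σ • 1) = A2 - σ • N1 := by
          rw [Matrix.mul_sub, hN1B, Matrix.mul_smul, Matrix.mul_one]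
        rw [this]
        exact hA2s.sub (hN1s.smul σ)
      calc (B - σ • 1)ᵀ * N1 = (B - σ • 1)ᵀ * N1ᵀ := by rw [hN1s.eq]
      _ = (N1 * (B - σ • 1))ᵀ := by rw [Matrix.transpose_mul]
      _ = N1 * (B - σ • 1) := hsym.eq
    calc ((B - σ • 1) *ᵥ x) ⬝ᵥ (N1 *ᵥ y)
        = (N1 *ᵥ y) ⬝ᵥ ((B - σ • 1) *ᵥ x) := dotProduct_comm _ _
    _ = ((N1 *ᵥ y) ᵥ* (B - σ • 1)) ⬝ᵥ x := dotProduct_mulVec _ _ _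
    _ = ((B - σ • 1)ᵀ *ᵥ (N1 *ᵥ y)) ⬝ᵥ x := by rw [mulVec_transpose]
    _ = x ⬝ᵥ ((B - σ • 1)ᵀ *ᵥ (N1 *ᵥ y)) := dotProduct_comm _ _
    _ = x ⬝ᵥ (((B - σ • 1)ᵀ * N1) *ᵥ y) := by rw [mulVec_mulVec]
    _ = x ⬝ᵥ ((N1 * (B - σ • 1)) *ᵥ y) := by rw [hmul]
    _ = x ⬝ᵥ N1 *ᵥ ((B - σ • 1) *ᵥ y) := by rw [← mulVec_mulVec]
  -- endgame: an isotropic kernel vector of a pencil member contradicts smoothness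
  have hEnd : ∀ (σ : K) (x : Fin 5 → K), x ≠ 0 → (B - σ • 1) *ᵥ x = 0 →
      x ⬝ᵥ N1 *ᵥ x = 0 → False := by
    intro σ x hx0 hLx hiso
    have hBx : B *ᵥ x = σ • x := by
      have h1 := hLx
      rw [sub_mulVec, smul_mulVec, one_mulVec] at h1
      exact sub_eq_zero.mp h1
    have hA2x : A2 *ᵥ x = σ • (N1 *ᵥ x) := by
      rw [← hN1B, ← mulVec_mulVec, hBx, mulVec_smul]
    have hq2 : x ⬝ᵥ A2 *ᵥ x = 0 := by
      rw [hA2x, dotProduct_smul, hiso, smul_zero]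
    have hA1x : A1 *ᵥ x = (1 - t1 * σ) • (N1 *ᵥ x) := by
      rw [hA1N, sub_mulVec, smul_mulVec, hA2x, smul_smul, sub_smul, one_smul]
    have hq1 : x ⬝ᵥ A1 *ᵥ x = 0 := by
      rw [hA1x, dotProduct_smul, hiso, smul_zero]
    refine hD x hx0 hq1 hq2 σ (-(1 - t1 * σ)) ?_ ?_
    · rintro ⟨h1, h2⟩
      rw [h1] at h2
      simp at h2
    · rw [hA1x, hA2x, smul_smul, smul_smul, ← add_smul,
        show σ * (1 - t1 * σ) + -(1 - t1 * σ) * σ = 0 by ring, zero_smul]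
  -- no nontrivial Jordan blocks
  have hLker : ∀ (σ : K) (u : Fin 5 → K),
      ((B - σ • 1) * (B - σ • 1)) *ᵥ u = 0 → (B - σ • 1) *ᵥ u = 0 := by
    intro σ u hu
    by_cases hv0 : (B - σ • 1) *ᵥ u = 0
    · exact hv0
    · exfalso
      have hLv : (B - σ • 1) *ᵥ ((B - σ • 1) *ᵥ u) = 0 := by
        rw [mulVec_mulVec]; exact hu
      have hiso : ((B - σ • 1) *ᵥ u) ⬝ᵥ N1 *ᵥ ((B - σ • 1) *ᵥ u) = 0 := by
        rw [hSA σ u ((B - σ • 1) *ᵥ u), hLv, mulVec_zero, dotProduct_zero]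
      exact hEnd σ _ hv0 hLv hiso
  -- eigenvectors for the same eigenvalue are dependent
  have hdep : ∀ (σ : K) (u x : Fin 5 → K), (B - σ • 1) *ᵥ u = 0 → (B - σ • 1) *ᵥ x = 0 →
      ∃ a b : K, ¬(a = 0 ∧ b = 0) ∧ a • u + b • x = 0 := by
    intro σ u x hu hx
    by_contra hcon
    push_neg at hcon
    by_cases hqu : u ⬝ᵥ N1 *ᵥ u = 0
    · refine hEnd σ u ?_ hu hqu
      intro h
      exact hcon 1 0 (by simp) (by simp [h])
    · obtain ⟨r, hr⟩ := IsAlgClosed.exists_root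
        (C (u ⬝ᵥ N1 *ᵥ u) * X ^ 2 + C (u ⬝ᵥ N1 *ᵥ x + x ⬝ᵥ N1 *ᵥ u) * X + C (x ⬝ᵥ N1 *ᵥ x))
        (by rw [Polynomial.degree_quadratic hqu]; norm_num)
      have heval : (u ⬝ᵥ N1 *ᵥ u) * r ^ 2 + (u ⬝ᵥ N1 *ᵥ x + x ⬝ᵥ N1 *ᵥ u) * r
          + (x ⬝ᵥ N1 *ᵥ x) = 0 := by
        simpa [Polynomial.IsRoot] using hr
      set y := r • u + x with hy
      have hy0 : y ≠ 0 := fun h => hcon r 1 (by simp) (by rw [one_smul]; exact h)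
      have hLy : (B - σ • 1) *ᵥ y = 0 := by
        rw [hy, mulVec_add, mulVec_smul, hu, hx, smul_zero, add_zero]
      have hisoy : y ⬝ᵥ N1 *ᵥ y = 0 := by
        rw [hy]
        rw [mulVec_add, mulVec_smul]
        rw [dotProduct_add, add_dotProduct, add_dotProduct, dotProduct_smul, dotProduct_smul,
          smul_dotProduct, smul_dotProduct]
        simp only [smul_eq_mul]
        linear_combination heval
      exact hEnd σ y hy0 hLy hisoy
  -- eigenspaces have dimension at most 1
  have hdim : ∀ σ : K,
      Module.finrank K (LinearMap.ker (mulVecLin (B - σ • 1))) ≤ 1 := by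
    intro σ
    set S := LinearMap.ker (mulVecLin (B - σ • 1)) with hS
    by_cases hSbot : S = ⊥
    · rw [hSbot]
      simp
    · obtain ⟨u, huS, hu0⟩ := Submodule.ne_bot_iff S |>.mp hSbot
      apply finrank_le_one (⟨u, huS⟩ : S)
      rintro ⟨x, hxS⟩
      have hu' : (B - σ • 1) *ᵥ u = 0 := by
        simpa [hS, LinearMap.mem_ker, mulVecLin_apply, sub_mulVec, smul_mulVec] using huS
      have hx' : (B - σ • 1) *ᵥ x = 0 := by
        simpa [hS, LinearMap.mem_ker, mulVecLin_apply, sub_mulVec, smul_mulVec] using hxS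
      obtain ⟨a, b, hab, habrel⟩ := hdep σ u x hu' hx'
      by_cases hb : b = 0
      · exfalso
        have ha : a ≠ 0 := fun h => hab ⟨h, hb⟩
        apply hu0
        have h1 : a • u = 0 := by simpa [hb] using habrel
        exact (smul_eq_zero.mp h1).resolve_left ha
      · refine ⟨-a / b, ?_⟩
        apply Subtype.ext
        show (-a / b) • u = x
        funext rr
        have h1 := congrFun habrel rr
        simp only [Pi.add_apply, Pi.smul_apply, smul_eq_mul, Pi.zero_apply] at h1 ⊢
        field_simp
        linear_combination -h1
  -- kernels of powers stabilize
  have hpker : ∀ (σ : K) (m : ℕ), 1 ≤ m → ∀ u : Fin 5 → K,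
      ((B - σ • 1) ^ m) *ᵥ u = 0 → (B - σ • 1) *ᵥ u = 0 := by
    intro σ m hm
    induction m, hm using Nat.le_induction with
    | base => intro u hu; rwa [pow_one] at hu
    | succ m hm ih =>
        intro u hu
        rw [pow_succ] at hu
        have h1 : (B - σ • 1) *ᵥ ((B - σ • 1) *ᵥ u) = 0 := by
          apply ih
          rwa [mulVec_mulVec]
        rw [mulVec_mulVec] at h1
        exact hLker σ u h1
  -- the characteristic polynomial of B has at least 5 distinct roots
  set χ := B.charpoly with hχ
  have hχ0 : χ ≠ 0 := B.charpoly_monic.ne_zero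
  set R := χ.roots.toFinset with hR
  have hcard : 5 ≤ R.card := by
    have hsplit : χ = (χ.roots.map fun a => X - C a).prod :=
      (IsAlgClosed.splits χ).eq_prod_roots_of_monic B.charpoly_monic
    have hlist : ((R.toList.map fun σ => ((X : K[X]) - C σ) ^ χ.roots.count σ)).prod = χ := by
      rw [Finset.prod_map_toList]
      conv_rhs => rw [hsplit]
      rw [Finset.prod_multiset_map_count]
    have haev : (R.toList.map fun σ => (B - σ • 1) ^ χ.roots.count σ).prod = 0 := by
      have h2 := congrArg (Polynomial.aeval B) hlist
      rw [map_list_prod, Matrix.aeval_self_charpoly, List.map_map] at h2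
      have hfun : ((Polynomial.aeval B : K[X] →ₐ[K] Matrix (Fin 5) (Fin 5) K)
          ∘ fun σ => ((X : K[X]) - C σ) ^ χ.roots.count σ)
          = fun σ => (B - σ • 1) ^ χ.roots.count σ := by
        funext σ
        simp only [Function.comp_apply]
        rw [map_pow, map_sub, Polynomial.aeval_X, Polynomial.aeval_C,
          Algebra.algebraMap_eq_smul_one]
      rw [hfun] at h2
      exact h2
    have hble := ker_list_prod (R.toList.map fun σ => (B - σ • 1) ^ χ.roots.count σ)
    rw [haev] at hble
    have h5 : Module.finrank K (LinearMap.ker (mulVecLin (0 : Matrix (Fin 5) (Fin 5) K))) = 5 := by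
      rw [mulVecLin_zero, LinearMap.ker_zero, finrank_top]
      simp [Module.finrank_pi]
    rw [h5] at hble
    have hbound :
        ((R.toList.map fun σ => (B - σ • 1) ^ χ.roots.count σ).map
          fun M => Module.finrank K (LinearMap.ker (mulVecLin M))).sum ≤ R.toList.length := by
      have hone : ∀ x ∈ R.toList.map ((fun M => Module.finrank K (LinearMap.ker (mulVecLin M)))
          ∘ fun σ => (B - σ • 1) ^ χ.roots.count σ), x ≤ 1 := by
        intro x hx
        rw [List.mem_map] at hx
        obtain ⟨σ, hσmem, rfl⟩ := hx
        have hm1 : 1 ≤ χ.roots.count σ := by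
          rw [Finset.mem_toList, hR, Multiset.mem_toFinset] at hσmem
          exact Multiset.count_pos.mpr hσmem
        have hle : LinearMap.ker (mulVecLin ((B - σ • 1) ^ χ.roots.count σ)) ≤
            LinearMap.ker (mulVecLin (B - σ • 1)) := by
          intro u hu
          rw [LinearMap.mem_ker, mulVecLin_apply] at hu ⊢
          exact hpker σ _ hm1 u hu
        exact le_trans (Submodule.finrank_mono hle) (hdim σ)
      calc ((R.toList.map fun σ => (B - σ • 1) ^ χ.roots.count σ).map
            fun M => Module.finrank K (LinearMap.ker (mulVecLin M))).sum
          = (R.toList.map ((fun M => Module.finrank K (LinearMap.ker (mulVecLin M)))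
            ∘ fun σ => (B - σ • 1) ^ χ.roots.count σ)).sum := by rw [List.map_map]
      _ ≤ (R.toList.map ((fun M => Module.finrank K (LinearMap.ker (mulVecLin M)))
            ∘ fun σ => (B - σ • 1) ^ χ.roots.count σ)).length • 1 :=
          List.sum_le_card_nsmul _ 1 hone
      _ = R.toList.length := by simp
    have hfin : (5 : ℕ) ≤ R.toList.length := le_trans hble hbound
    simpa [Finset.length_toList] using hfin
  -- choose 5 distinct roots
  obtain ⟨S5, hS5sub, hS5card⟩ := Finset.exists_subset_card_eq hcard
  set σv : Fin 5 → K := fun i => ((S5.equivFin.symm (Fin.cast hS5card.symm i)) : K) with hσv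
  have hσinj : Function.Injective σv := by
    intro a b hab
    have h1 : S5.equivFin.symm (Fin.cast hS5card.symm a)
        = S5.equivFin.symm (Fin.cast hS5card.symm b) := Subtype.ext hab
    have h2 := S5.equivFin.symm.injective h1
    have h3 := congrArg Fin.val h2
    simp only [Fin.coe_cast] at h3
    exact Fin.ext h3
  have hσR : ∀ i, σv i ∈ R := fun i => hS5sub (S5.equivFin.symm (Fin.cast hS5card.symm i)).2
  -- each root gives a singular member of the pencil
  have hdet0 : ∀ i, (σv i • N1 - A2).det = 0 := by
    intro i
    have hroot : χ.eval (σv i) = 0 := by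
      have := hσR i
      rw [hR, Multiset.mem_toFinset, Polynomial.mem_roots hχ0] at this
      exact this
    have h1 : σv i • N1 - A2 = N1 * (σv i • 1 - B) := by
      rw [Matrix.mul_sub, hN1B, Matrix.mul_smul, Matrix.mul_one]
    rw [h1, Matrix.det_mul]
    rw [hχ, eval_charpoly_scalar] at hroot
    rw [hroot, mul_zero]
  have hmember : ∀ i : Fin 5, σv i • A1 + (σv i * t1 - 1) • A2 = σv i • N1 - A2 := by
    intro i
    rw [hN1, smul_add, smul_smul, sub_smul, one_smul]
    abel
  have h01 : ∀ i : Fin 5, ¬(σv i = 0 ∧ σv i * t1 - 1 = 0) := by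
    rintro i ⟨h1, h2⟩
    rw [h1, zero_mul] at h2
    simp at h2
  have hratall : ∀ i : Fin 5, ∃ (c : K) (lam' mu' : k), c ≠ 0 ∧
      σv i = c * f lam' ∧ (σv i * t1 - 1) = c * f mu' := by
    intro i
    apply hrat _ _ (h01 i)
    rw [hmember i]
    exact hdet0 i
  choose cc lam mu hcc hclam hcmu using hratall
  -- rational singular members and kernel vectors over k
  have hdetk : ∀ i, (lam i • M1 + mu i • M2).det = 0 := by
    intro i
    have hmap : (lam i • M1 + mu i • M2).map f = f (lam i) • A1 + f (mu i) • A2 := by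
      rw [hA1, hA2]
      ext r s
      simp [Matrix.map_apply, Matrix.add_apply, Matrix.smul_apply, _root_.map_mul]
    have hfl : f (lam i) = (cc i)⁻¹ * σv i := by
      rw [hclam i, ← mul_assoc, inv_mul_cancel₀ (hcc i), one_mul]
    have hfm : f (mu i) = (cc i)⁻¹ * (σv i * t1 - 1) := by
      rw [hcmu i, ← mul_assoc, inv_mul_cancel₀ (hcc i), one_mul]
    have h1 : f ((lam i • M1 + mu i • M2).det) = 0 := by
      rw [RingHom.map_det]
      show ((lam i • M1 + mu i • M2).map f).det = 0
      rw [hmap, hfl, hfm]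
      have h3 : ((cc i)⁻¹ * σv i) • A1 + ((cc i)⁻¹ * (σv i * t1 - 1)) • A2
          = (cc i)⁻¹ • (σv i • N1 - A2) := by
        rw [← hmember i, smul_add, smul_smul, smul_smul]
      rw [h3, Matrix.det_smul, hdet0 i, mul_zero]
    have hfinj : Function.Injective f := f.injective
    rw [← map_zero f] at h1
    exact hfinj h1
  have hkerk : ∀ i, ∃ v : Fin 5 → k, v ≠ 0 ∧ (lam i • M1 + mu i • M2) *ᵥ v = 0 :=
    fun i => Matrix.exists_mulVec_eq_zero_iff.mpr (hdetk i)
  choose v hv0 hvker using hkerk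
  -- nondegeneracy of the rational parameters
  have hpair : ∀ i, ¬(lam i = 0 ∧ mu i = 0) := by
    rintro i ⟨h1, h2⟩
    apply h01 i
    constructor
    · rw [hclam i, h1, map_zero, mul_zero]
    · rw [hcmu i, h2, map_zero, mul_zero]
  have hd : ∀ i j, i ≠ j → lam i * mu j - lam j * mu i ≠ 0 := by
    intro i j hij h0
    have h2 : cc i * cc j * (f (lam i) * f (mu j) - f (lam j) * f (mu i)) = σv j - σv i := by
      linear_combination (-(f (mu j) * cc j)) * hclam i + (f (mu i) * cc i) * hclam j
        - σv i * hcmu j + σv j * hcmu i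
    have h1 : f (lam i) * f (mu j) - f (lam j) * f (mu i) = 0 := by
      rw [← _root_.map_mul, ← _root_.map_mul, ← map_sub, h0, map_zero]
    rw [h1, mul_zero] at h2
    exact hij (hσinj (sub_eq_zero.mp h2.symm).symm)
  -- orthogonality of the kernel vectors
  have horthk : ∀ i j, i ≠ j → v i ⬝ᵥ M1 *ᵥ v j = 0 ∧ v i ⬝ᵥ M2 *ᵥ v j = 0 := by
    intro i j hij
    have r1 : lam j * (v i ⬝ᵥ M1 *ᵥ v j) + mu j * (v i ⬝ᵥ M2 *ᵥ v j) = 0 := by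
      have h1 := congrArg (fun z => v i ⬝ᵥ z) (hvker j)
      simpa [add_mulVec, smul_mulVec, dotProduct_add, dotProduct_smul,
        smul_eq_mul] using h1
    have r2 : lam i * (v i ⬝ᵥ M1 *ᵥ v j) + mu i * (v i ⬝ᵥ M2 *ᵥ v j) = 0 := by
      have h1 := congrArg (fun z => v j ⬝ᵥ z) (hvker i)
      simp only [add_mulVec, smul_mulVec, dotProduct_add, dotProduct_smul,
        smul_eq_mul, dotProduct_zero] at h1
      rwa [bilin_comm M1 hs1 (v j) (v i), bilin_comm M2 hs2 (v j) (v i)] at h1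
    constructor
    · have hmul : (lam i * mu j - lam j * mu i) * (v i ⬝ᵥ M1 *ᵥ v j) = 0 := by
        linear_combination mu j * r2 - mu i * r1
      exact (mul_eq_zero.mp hmul).resolve_left (hd i j hij)
    · have hmul : (lam i * mu j - lam j * mu i) * (v i ⬝ᵥ M2 *ᵥ v j) = 0 := by
        linear_combination lam i * r1 - lam j * r2
      exact (mul_eq_zero.mp hmul).resolve_left (hd i j hij)
  -- anisotropy of the kernel vectors
  have haniso : ∀ i, ¬(v i ⬝ᵥ M1 *ᵥ v i = 0 ∧ v i ⬝ᵥ M2 *ᵥ v i = 0) := by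
    rintro i ⟨hq1, hq2⟩
    have hx0 : (f ∘ v i) ≠ 0 := by
      intro h
      apply hv0 i
      funext rr
      have h1 := congrFun h rr
      simp only [Function.comp_apply, Pi.zero_apply] at h1
      rw [← map_zero f] at h1
      exact f.injective h1
    have hxq1 : (f ∘ v i) ⬝ᵥ A1 *ᵥ (f ∘ v i) = 0 := by
      rw [hA1, mulVec_map', dot_map', hq1, map_zero]
    have hxq2 : (f ∘ v i) ⬝ᵥ A2 *ᵥ (f ∘ v i) = 0 := by
      rw [hA2, mulVec_map', dot_map', hq2, map_zero]
    have hrel : f (lam i) • (A1 *ᵥ (f ∘ v i)) + f (mu i) • (A2 *ᵥ (f ∘ v i)) = 0 := by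
      have h1 : lam i • (M1 *ᵥ v i) + mu i • (M2 *ᵥ v i) = 0 := by
        have := hvker i
        rwa [add_mulVec, smul_mulVec, smul_mulVec] at this
      rw [hA1, hA2, mulVec_map', mulVec_map']
      funext rr
      simp only [Pi.add_apply, Pi.smul_apply, Function.comp_apply, smul_eq_mul, Pi.zero_apply]
      have h3 := congrFun h1 rr
      simp only [Pi.add_apply, Pi.smul_apply, smul_eq_mul, Pi.zero_apply] at h3
      calc f (lam i) * f ((M1 *ᵥ v i) rr) + f (mu i) * f ((M2 *ᵥ v i) rr)
          = f (lam i * (M1 *ᵥ v i) rr + mu i * (M2 *ᵥ v i) rr) := by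
            rw [map_add, _root_.map_mul, _root_.map_mul]
      _ = f 0 := by rw [h3]
      _ = 0 := map_zero f
    have hcoef : ¬(f (lam i) = 0 ∧ f (mu i) = 0) := by
      rintro ⟨h1, h2⟩
      apply hpair i
      rw [← map_zero f] at h1 h2
      exact ⟨f.injective h1, f.injective h2⟩
    exact hD (f ∘ v i) hx0 hxq1 hxq2 _ _ hcoef hrel
  -- assemble the diagonalizing matrix
  set P : Matrix (Fin 5) (Fin 5) k := Matrix.of fun r j => v j r with hP
  have hentry : ∀ (M : Matrix (Fin 5) (Fin 5) k) (i j : Fin 5),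
      (Pᵀ * M * P) i j = v i ⬝ᵥ M *ᵥ v j := by
    intro M i j
    calc (Pᵀ * M * P) i j = ∑ s, (∑ r, P r i * M r s) * P s j := by
          simp [Matrix.mul_apply, Matrix.transpose_apply]
    _ = ∑ s, ∑ r, (P r i * M r s) * P s j := by
          refine Finset.sum_congr rfl fun s _ => ?_
          rw [Finset.sum_mul]
    _ = ∑ r, ∑ s, (P r i * M r s) * P s j := Finset.sum_comm
    _ = ∑ r, P r i * (∑ s, M r s * P s j) := by
          refine Finset.sum_congr rfl fun r _ => ?_
          rw [Finset.mul_sum]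
          refine Finset.sum_congr rfl fun s _ => by ring
    _ = v i ⬝ᵥ M *ᵥ v j := by
          simp [dotProduct, mulVec, hP]
  have hPdet : P.det ≠ 0 := by
    intro h0
    obtain ⟨c, hc0, hPc⟩ := Matrix.exists_mulVec_eq_zero_iff.mpr h0
    have hsum : (∑ j, c j • v j) = 0 := by
      funext rr
      have h1 := congrFun hPc rr
      simp only [Pi.zero_apply, mulVec, dotProduct, hP, Matrix.of_apply] at h1
      show (∑ j, c j • v j) rr = 0
      rw [Finset.sum_apply]
      calc ∑ j, (c j • v j) rr = ∑ j, v j rr * c j := by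
            refine Finset.sum_congr rfl fun j _ => ?_
            simp [mul_comm]
      _ = 0 := h1
    obtain ⟨j0, hj0⟩ := Function.ne_iff.mp hc0
    have hz : ∀ (M : Matrix (Fin 5) (Fin 5) k), (∀ b, b ≠ j0 → v j0 ⬝ᵥ M *ᵥ v b = 0) →
        v j0 ⬝ᵥ M *ᵥ v j0 = 0 := by
      intro M hoff
      have h0' : ∑ j, c j * (v j0 ⬝ᵥ M *ᵥ v j) = 0 := by
        rw [← dot_mulVec_sum, hsum, mulVec_zero, dotProduct_zero]
      rw [Finset.sum_eq_single j0 (fun b _ hb => by rw [hoff b hb, mul_zero]) (by simp)] at h0'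
      exact (mul_eq_zero.mp h0').resolve_left hj0
    apply haniso j0
    exact ⟨hz M1 fun b hb => (horthk j0 b (Ne.symm hb)).1,
      hz M2 fun b hb => (horthk j0 b (Ne.symm hb)).2⟩
  refine ⟨P, isUnit_iff_ne_zero.mpr hPdet, ?_, ?_⟩
  · intro i j hij
    rw [hentry M1 i j]
    exact (horthk i j hij).1
  · intro i j hij
    rw [hentry M2 i j]
    exact (horthk i j hij).2

end Stmt6Aux

open Matrix

/-- Let `q₁, q₂` be quadratic forms in 5 variables over a field `k` of characteristic not 2
defining a smooth complete intersection surface `X ⊂ P⁴_k`.  If all five roots of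
`det (λ M₁ + μ M₂)` in `P¹(k̄)` are `k`-rational, then `q₁` and `q₂` are simultaneously
diagonalizable over `k`: there is `P ∈ GL₅(k)` with `Pᵀ M₁ P` and `Pᵀ M₂ P` both diagonal. -/
theorem stmt6 {k : Type*} [Field k] (h2 : (2 : k) ≠ 0)
    (M1 M2 : Matrix (Fin 5) (Fin 5) k) (hs1 : M1.IsSymm) (hs2 : M2.IsSymm)
    (hsmooth : ∀ x : Fin 5 → AlgebraicClosure k, x ≠ 0 →
      x ⬝ᵥ (M1.map (algebraMap k (AlgebraicClosure k))).mulVec x = 0 →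
      x ⬝ᵥ (M2.map (algebraMap k (AlgebraicClosure k))).mulVec x = 0 →
      LinearIndependent (AlgebraicClosure k)
        ![(M1.map (algebraMap k (AlgebraicClosure k))).mulVec x,
          (M2.map (algebraMap k (AlgebraicClosure k))).mulVec x])
    (hrat : ∀ lam mu : AlgebraicClosure k, ¬(lam = 0 ∧ mu = 0) →
      (lam • M1.map (algebraMap k (AlgebraicClosure k)) +
        mu • M2.map (algebraMap k (AlgebraicClosure k))).det = 0 →
      ∃ (c : AlgebraicClosure k) (lam' mu' : k), c ≠ 0 ∧
        lam = c * algebraMap k (AlgebraicClosure k) lam' ∧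
        mu = c * algebraMap k (AlgebraicClosure k) mu') :
    ∃ P : Matrix (Fin 5) (Fin 5) k, IsUnit P.det ∧
      (Pᵀ * M1 * P).IsDiag ∧ (Pᵀ * M2 * P).IsDiag := by
  apply Stmt6Aux.main ((algebraMap k (AlgebraicClosure k)) : k →+* AlgebraicClosure k)
    M1 M2 hs1 hs2 ?_ hrat
  intro x hx hq1 hq2 a b hab hrel
  have hli := hsmooth x hx hq1 hq2
  rw [Fintype.linearIndependent_iff] at hli
  have h2' := hli ![a, b] ?_
  · exact hab ⟨by simpa using h2' 0, by simpa using h2' 1⟩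
  · rw [Fin.sum_univ_two]
    simpa using hrel
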